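/- Let X ∈ ℝ^{n×d} with rows x_1ᵀ, …, x_nᵀ, let y ∈ {−1, 1}ⁿ, let ε ≥ 0, let D_1, …, D_{P̂} be diagonal matrices with 0/1 diagonal entries (d_{ik} the k-th diagonal entry of D_i), and let (v_i, w_i)_{i=1}^{P̂} ⊆ ℝ^d × ℝ^d. Then sup over Δ ∈ ℝ^{n×d} whose rows δ_1, …, δ_n satisfy ‖δ_k‖∞ ≤ ε of (1/n) ∑_{k=1}^n (1 − y_k ∑_{i=1}^{P̂} d_{ik} (x_k + δ_k)ᵀ (v_i − w_i))_+ equals (1/n) ∑_{k=1}^n (1 − y_k ∑_{i=1}^{P̂} d_{ik} x_kᵀ (v_i − w_i) + ε ‖∑_{i=1}^{P̂} d_{ik} (v_i − w_i)‖₁)_+, and the supremum is attained at Δ* = −ε · sgn(∑_{i=1}^{P̂} D_i y (v_i − w_i)ᵀ), where sgn is applied entrywise. Consequently, the bi-level hinge-loss adversarial problem obtained by adding β ∑_{i=1}^{P̂} (‖v_i‖₂ + ‖w_i‖₂) and minimizing over (v_i, w_i) subject to (2D_i − I_n) X v_i ≥ ε ‖v_i‖₁ and (2D_i − I_n) X w_i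 ≥ ε ‖w_i‖₁ for all i, has the same optimal value as the convex program with the explicit objective above plus the same regularizer and constraints. -/

import Mathlib

open Matrix

noncomputable section


private lemma sign_mul_self' (t : ℝ) : Real.sign t * t = |t| := by
  rcases lt_trichotomy t 0 with h|h|h
  · rw [Real.sign_of_neg h, abs_of_neg h]; ring
  · simp [h]
  · rw [Real.sign_of_pos h, abs_of_pos h]; ring

private lemma abs_sign_le' (t : ℝ) : |Real.sign t| ≤ 1 := by
  rcases lt_trichotomy t 0 with h|h|h
  · simp [Real.sign_of_neg h]
  · simp [h]
  · simp [Real.sign_of_pos h]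

private lemma swap_sum' {n dd Ph : ℕ} (dg : Fin Ph → Fin n → ℝ)
    (v w : Fin Ph → Fin dd → ℝ) (A : Fin dd → ℝ) (k : Fin n) :
    ∑ i, dg i k * ∑ h, A h * (v i h - w i h)
      = ∑ h, A h * ∑ i, dg i k * (v i h - w i h) := by
  simp_rw [Finset.mul_sum]
  rw [Finset.sum_comm]
  exact Finset.sum_congr rfl fun h _ => Finset.sum_congr rfl fun i _ => by ring

private lemma attain' {n dd Ph : ℕ} (X : Matrix (Fin n) (Fin dd) ℝ) (y : Fin n → ℝ)
    (hy : ∀ k, y k = 1 ∨ y k = -1) (ε : ℝ)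
    (dg : Fin Ph → Fin n → ℝ) (v w : Fin Ph → Fin dd → ℝ) (k : Fin n) :
    1 - y k * ∑ i, dg i k * ∑ h, (X k h +
        (-ε * Real.sign (∑ i', dg i' k * (y k * (v i' h - w i' h))))) * (v i h - w i h)
      = 1 - y k * (∑ i, dg i k * ∑ h, X k h * (v i h - w i h)) +
          ε * ∑ h, |∑ i, dg i k * (v i h - w i h)| := by
  have habs : |y k| = 1 := by rcases hy k with h|h <;> simp [h]
  set s : Fin dd → ℝ := fun h => ∑ i, dg i k * (v i h - w i h) with hs
  have harg : ∀ h, ∑ i', dg i' k * (y k * (v i' h - w i' h)) = y k * s h := by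
    intro h; rw [hs]; simp only [Finset.mul_sum]
    exact Finset.sum_congr rfl fun i _ => by ring
  have h1 : ∑ i, dg i k * ∑ h, (X k h +
        (-ε * Real.sign (∑ i', dg i' k * (y k * (v i' h - w i' h))))) * (v i h - w i h)
      = ∑ h, X k h * s h + ∑ h, (-ε * Real.sign (y k * s h)) * s h := by
    rw [swap_sum' dg v w _ k]
    simp_rw [harg, add_mul, Finset.sum_add_distrib]
    rfl
  have h2 : ∑ i, dg i k * ∑ h, X k h * (v i h - w i h) = ∑ h, X k h * s h :=
    swap_sum' dg v w _ k
  have term : ∀ h, y k * ((-ε * Real.sign (y k * s h)) * s h) = -(ε * |s h|) := by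
    intro h
    have e1 : y k * ((-ε * Real.sign (y k * s h)) * s h)
        = -ε * (Real.sign (y k * s h) * (y k * s h)) := by ring
    rw [e1, sign_mul_self', abs_mul, habs, one_mul]; ring
  have h3 : y k * ∑ h, (-ε * Real.sign (y k * s h)) * s h = -(ε * ∑ h, |s h|) := by
    rw [Finset.mul_sum]
    calc ∑ h, y k * ((-ε * Real.sign (y k * s h)) * s h)
        = ∑ h, -(ε * |s h|) := Finset.sum_congr rfl fun h _ => term h
      _ = -(ε * ∑ h, |s h|) := by rw [Finset.sum_neg_distrib, Finset.mul_sum]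
  rw [h1, h2, mul_add, h3]; ring

private lemma ub' {n dd Ph : ℕ} (X : Matrix (Fin n) (Fin dd) ℝ) (y : Fin n → ℝ)
    (hy : ∀ k, y k = 1 ∨ y k = -1) (ε : ℝ)
    (dg : Fin Ph → Fin n → ℝ) (v w : Fin Ph → Fin dd → ℝ)
    (Δ : Matrix (Fin n) (Fin dd) ℝ) (hΔ : ∀ k h, |Δ k h| ≤ ε) (k : Fin n) :
    1 - y k * ∑ i, dg i k * ∑ h, (X k h + Δ k h) * (v i h - w i h)
      ≤ 1 - y k * (∑ i, dg i k * ∑ h, X k h * (v i h - w i h)) +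
          ε * ∑ h, |∑ i, dg i k * (v i h - w i h)| := by
  have habs : |y k| = 1 := by rcases hy k with h|h <;> simp [h]
  set s : Fin dd → ℝ := fun h => ∑ i, dg i k * (v i h - w i h) with hs
  have h1 : ∑ i, dg i k * ∑ h, (X k h + Δ k h) * (v i h - w i h)
      = ∑ h, X k h * s h + ∑ h, Δ k h * s h := by
    rw [swap_sum' dg v w _ k]
    simp_rw [add_mul, Finset.sum_add_distrib]
    rfl
  have h2 : ∑ i, dg i k * ∑ h, X k h * (v i h - w i h) = ∑ h, X k h * s h :=
    swap_sum' dg v w _ k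
  have key : -(y k * ∑ h, Δ k h * s h) ≤ ε * ∑ h, |s h| := by
    rw [Finset.mul_sum, ← Finset.sum_neg_distrib, Finset.mul_sum]
    refine Finset.sum_le_sum fun h _ => ?_
    calc -(y k * (Δ k h * s h)) ≤ |y k * (Δ k h * s h)| := neg_le_abs _
      _ = |Δ k h| * |s h| := by rw [abs_mul, habs, one_mul, abs_mul]
      _ ≤ ε * |s h| := mul_le_mul_of_nonneg_right (hΔ k h) (abs_nonneg _)
  rw [h1, h2, mul_add]
  linarith

private lemma key' {n dd Ph : ℕ} (X : Matrix (Fin n) (Fin dd) ℝ) (y : Fin n → ℝ)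
    (hy : ∀ k, y k = 1 ∨ y k = -1) (ε : ℝ) (hε : 0 ≤ ε)
    (dg : Fin Ph → Fin n → ℝ) (v w : Fin Ph → Fin dd → ℝ) :
    IsGreatest {t : ℝ | ∃ Δ : Matrix (Fin n) (Fin dd) ℝ, (∀ k h, |Δ k h| ≤ ε) ∧
        t = (1 / (n : ℝ)) * ∑ k, max
          (1 - y k * ∑ i, dg i k * ∑ h, (X k h + Δ k h) * (v i h - w i h)) 0}
      ((1 / (n : ℝ)) * ∑ k, max
        (1 - y k * (∑ i, dg i k * ∑ h, X k h * (v i h - w i h)) +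
          ε * ∑ h, |∑ i, dg i k * (v i h - w i h)|) 0) := by
  constructor
  · refine ⟨fun k' h' => -ε * Real.sign (∑ i, dg i k' * (y k' * (v i h' - w i h'))), ?_, ?_⟩
    · intro k h
      calc |(-ε * Real.sign (∑ i, dg i k * (y k * (v i h - w i h))))|
          = ε * |Real.sign (∑ i, dg i k * (y k * (v i h - w i h)))| := by
            rw [abs_mul, abs_neg, abs_of_nonneg hε]
        _ ≤ ε * 1 := mul_le_mul_of_nonneg_left (abs_sign_le' _) hε
        _ = ε := mul_one ε
    · congr 1
      exact Finset.sum_congr rfl fun k _ => by rw [attain' X y hy ε dg v w k]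
  · rintro t ⟨Δ, hΔ, rfl⟩
    apply mul_le_mul_of_nonneg_left _ (by positivity)
    exact Finset.sum_le_sum fun k _ => max_le_max (ub' X y hy ε dg v w Δ hΔ k) le_rfl

/-- closed form of the inner maximization of the hinge-loss adversarial
objective over row-wise ℓ∞-bounded perturbations, its maximizer
`Δ* = −ε·sgn(∑ᵢ Dᵢ y (vᵢ−wᵢ)ᵀ)`, and the resulting equality of optimal values between the
bi-level problem and the explicit convex program. -/
theorem statement_11 {n dd Ph : ℕ}
    (X : Matrix (Fin n) (Fin dd) ℝ) (y : Fin n → ℝ) (hy : ∀ k, y k = 1 ∨ y k = -1)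
    (ε : ℝ) (hε : 0 ≤ ε) (β : ℝ) (hβ : 0 < β)
    (dg : Fin Ph → Fin n → ℝ) (hdg : ∀ i k, dg i k = 0 ∨ dg i k = 1)
    (v w : Fin Ph → Fin dd → ℝ) :
    -- (a) the inner supremum has the explicit closed form:
    IsGreatest {t : ℝ | ∃ Δ : Matrix (Fin n) (Fin dd) ℝ, (∀ k h, |Δ k h| ≤ ε) ∧
        t = (1 / (n : ℝ)) * ∑ k, max
          (1 - y k * ∑ i, dg i k * ∑ h, (X k h + Δ k h) * (v i h - w i h)) 0}
      ((1 / (n : ℝ)) * ∑ k, max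
        (1 - y k * (∑ i, dg i k * ∑ h, X k h * (v i h - w i h)) +
          ε * ∑ h, |∑ i, dg i k * (v i h - w i h)|) 0) ∧
    -- (b) it is attained at Δ* = −ε·sgn(∑ᵢ Dᵢ y (vᵢ − wᵢ)ᵀ):
    ((∀ k h, |(fun k' h' => -ε * Real.sign (∑ i, dg i k' * (y k' * (v i h' - w i h'))) :
        Matrix (Fin n) (Fin dd) ℝ) k h| ≤ ε) ∧
      (1 / (n : ℝ)) * ∑ k, max
        (1 - y k * ∑ i, dg i k * ∑ h, (X k h +
          (-ε * Real.sign (∑ i', dg i' k * (y k * (v i' h - w i' h))))) * (v i h - w i h)) 0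
      = (1 / (n : ℝ)) * ∑ k, max
        (1 - y k * (∑ i, dg i k * ∑ h, X k h * (v i h - w i h)) +
          ε * ∑ h, |∑ i, dg i k * (v i h - w i h)|) 0) ∧
    -- (c) consequently, the bi-level adversarial problem and the explicit convex program
    -- have the same optimal value:
    sInf {c : ℝ | ∃ v' w' : Fin Ph → Fin dd → ℝ,
        (∀ i, ∀ k, ε * ∑ h, |v' i h| ≤
          (((2 : ℝ) • Matrix.diagonal (dg i) - 1) *ᵥ (X *ᵥ v' i)) k) ∧
        (∀ i, ∀ k, ε * ∑ h, |w' i h| ≤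
          (((2 : ℝ) • Matrix.diagonal (dg i) - 1) *ᵥ (X *ᵥ w' i)) k) ∧
        c = sSup {t : ℝ | ∃ Δ : Matrix (Fin n) (Fin dd) ℝ, (∀ k h, |Δ k h| ≤ ε) ∧
            t = (1 / (n : ℝ)) * ∑ k, max
              (1 - y k * ∑ i, dg i k * ∑ h, (X k h + Δ k h) * (v' i h - w' i h)) 0} +
          β * ∑ i, (Real.sqrt (∑ h, (v' i h) ^ 2) + Real.sqrt (∑ h, (w' i h) ^ 2))}
      = sInf {c : ℝ | ∃ v' w' : Fin Ph → Fin dd → ℝ,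
        (∀ i, ∀ k, ε * ∑ h, |v' i h| ≤
          (((2 : ℝ) • Matrix.diagonal (dg i) - 1) *ᵥ (X *ᵥ v' i)) k) ∧
        (∀ i, ∀ k, ε * ∑ h, |w' i h| ≤
          (((2 : ℝ) • Matrix.diagonal (dg i) - 1) *ᵥ (X *ᵥ w' i)) k) ∧
        c = (1 / (n : ℝ)) * ∑ k, max
            (1 - y k * (∑ i, dg i k * ∑ h, X k h * (v' i h - w' i h)) +
              ε * ∑ h, |∑ i, dg i k * (v' i h - w' i h)|) 0 +
          β * ∑ i, (Real.sqrt (∑ h, (v' i h) ^ 2) + Real.sqrt (∑ h, (w' i h) ^ 2))} := by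
  refine ⟨key' X y hy ε hε dg v w, ⟨?_, ?_⟩, ?_⟩
  · intro k h
    calc |(-ε * Real.sign (∑ i, dg i k * (y k * (v i h - w i h))))|
        = ε * |Real.sign (∑ i, dg i k * (y k * (v i h - w i h)))| := by
          rw [abs_mul, abs_neg, abs_of_nonneg hε]
      _ ≤ ε * 1 := mul_le_mul_of_nonneg_left (abs_sign_le' _) hε
      _ = ε := mul_one ε
  · congr 1
    exact Finset.sum_congr rfl fun k _ => by rw [attain' X y hy ε dg v w k]
  · congr 1
    ext c
    constructor
    · rintro ⟨v', w', h1, h2, rfl⟩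
      exact ⟨v', w', h1, h2, by rw [(key' X y hy ε hε dg v' w').csSup_eq]⟩
    · rintro ⟨v', w', h1, h2, rfl⟩
      exact ⟨v', w', h1, h2, by rw [(key' X y hy ε hε dg v' w').csSup_eq]⟩
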